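/- Let x_u ∈ ℝ^{N_u} and x_v ∈ ℝ^{N_v} be grid vectors with all entries in [α,β] and with pairwise distinct entries, and let H_u ∈ ℝ^{N_u×N_u} and H_v ∈ ℝ^{N_v×N_v} be symmetric positive definite matrices that are quadratures of order q on [α,β] with respect to x_u and x_v, respectively. Let q_{u2v} and q_{v2u} be integers with 1 ≤ q_{u2v} ≤ N_u, 1 ≤ q_{v2u} ≤ N_v and q_{u2v} + q_{v2u} ≤ q + 1. Then there exists a matrix I_{u2v} ∈ ℝ^{N_v×N_u} such that I_{u2v} x_u^k = x_v^k for all 0 ≤ k ≤ q_{u2v}−1 and such that its Hilbert adjoint I_{v2u} = H_u^{-1} I_{u2v}ᵀ H_v satisfies I_{v2u} x_v^k = x_u^k for all 0 ≤ k ≤ q_{v2u}−1. -/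

import Mathlib

open Matrix

/-- The entrywise power vector `(x_1^j, …, x_N^j)ᵀ`. -/
def pvec {N : ℕ} (x : Fin N → ℝ) (j : ℕ) : Fin N → ℝ := fun i => x i ^ j

/-- Kernel of a tall Vandermonde matrix with distinct nodes is trivial. -/
lemma vand_ker {N m : ℕ} (hm : m ≤ N) (x : Fin N → ℝ) (hx : Function.Injective x)
    {v : Fin m → ℝ}
    (hv : (Matrix.of fun (i : Fin N) (k : Fin m) => x i ^ (k : ℕ)) *ᵥ v = 0) : v = 0 := by
  apply Matrix.eq_zero_of_forall_index_sum_pow_mul_eq_zero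
    (f := fun j : Fin m => x (Fin.castLE hm j))
    (fun a b hab => by
      have := hx hab
      exact Fin.castLE_injective hm this)
  intro j
  have := congrFun hv (Fin.castLE hm j)
  simpa [Matrix.mulVec, dotProduct] using this

/-- `Mᵀ * M` is positive definite if `M` has trivial kernel. -/
lemma posdef_transpose_mul_self {N m : ℕ} (M : Matrix (Fin N) (Fin m) ℝ)
    (hM : ∀ v, M *ᵥ v = 0 → v = 0) : (Mᵀ * M).PosDef := by
  rw [Matrix.posDef_iff_dotProduct_mulVec]
  constructor
  · have h := Matrix.isHermitian_conjTranspose_mul_self M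
    simpa using h
  · intro v hv
    have key : star v ⬝ᵥ (Mᵀ * M) *ᵥ v = (M *ᵥ v) ⬝ᵥ (M *ᵥ v) := by
      rw [← Matrix.mulVec_mulVec, Matrix.dotProduct_mulVec, Matrix.vecMul_transpose]
      simp [dotProduct_comm]
    rw [key]
    have hMv : M *ᵥ v ≠ 0 := fun h => hv (hM v h)
    have h0 : (M *ᵥ v) ⬝ᵥ (M *ᵥ v) ≠ 0 := fun h =>
      hMv (dotProduct_self_eq_zero.mp h)
    have h1 : 0 ≤ (M *ᵥ v) ⬝ᵥ (M *ᵥ v) :=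
      Finset.sum_nonneg fun i _ => mul_self_nonneg _
    exact lt_of_le_of_ne h1 (Ne.symm h0)

theorem stmt1 {Nu Nv : ℕ} {α β : ℝ} (hαβ : α < β)
    (xu : Fin Nu → ℝ) (xv : Fin Nv → ℝ)
    (hxu : ∀ i, xu i ∈ Set.Icc α β) (hxv : ∀ i, xv i ∈ Set.Icc α β)
    (hxu' : Function.Injective xu) (hxv' : Function.Injective xv)
    (Hu : Matrix (Fin Nu) (Fin Nu) ℝ) (Hv : Matrix (Fin Nv) (Fin Nv) ℝ)
    (hHu : Hu.PosDef) (hHv : Hv.PosDef)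
    (q : ℕ)
    (hQu : ∀ i j : ℕ, i + j < q →
      pvec xu i ⬝ᵥ Hu *ᵥ pvec xu j = (β ^ (i + j + 1) - α ^ (i + j + 1)) / (i + j + 1))
    (hQv : ∀ i j : ℕ, i + j < q →
      pvec xv i ⬝ᵥ Hv *ᵥ pvec xv j = (β ^ (i + j + 1) - α ^ (i + j + 1)) / (i + j + 1))
    (quv qvu : ℕ)
    (hquv : 1 ≤ quv) (hquvN : quv ≤ Nu)
    (hqvu : 1 ≤ qvu) (hqvuN : qvu ≤ Nv)
    (hsum : quv + qvu ≤ q + 1) :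
    ∃ Iuv : Matrix (Fin Nv) (Fin Nu) ℝ,
      (∀ k : ℕ, k < quv → Iuv *ᵥ pvec xu k = pvec xv k) ∧
      (∀ k : ℕ, k < qvu → (Hu⁻¹ * Iuvᵀ * Hv) *ᵥ pvec xv k = pvec xu k) := by
  classical
  -- Vandermonde-type matrices
  set A : Matrix (Fin Nu) (Fin quv) ℝ := Matrix.of fun i k => xu i ^ (k : ℕ) with hAdef
  set B : Matrix (Fin Nv) (Fin quv) ℝ := Matrix.of fun i k => xv i ^ (k : ℕ) with hBdef
  set Vv : Matrix (Fin Nv) (Fin qvu) ℝ := Matrix.of fun i k => xv i ^ (k : ℕ) with hVvdef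
  set Vu : Matrix (Fin Nu) (Fin qvu) ℝ := Matrix.of fun i k => xu i ^ (k : ℕ) with hVudef
  set C : Matrix (Fin Nv) (Fin qvu) ℝ := Hv * Vv with hCdef
  set D : Matrix (Fin Nu) (Fin qvu) ℝ := Hu * Vu with hDdef
  -- trivial kernels
  have hAker : ∀ v, A *ᵥ v = 0 → v = 0 := fun v hv => vand_ker hquvN xu hxu' hv
  have hHvdet : Hv.det ≠ 0 := ne_of_gt hHv.det_pos
  have hHudet : Hu.det ≠ 0 := ne_of_gt hHu.det_pos
  have hCker : ∀ v, C *ᵥ v = 0 → v = 0 := by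
    intro v hv
    rw [hCdef, ← Matrix.mulVec_mulVec] at hv
    have h2 := Matrix.eq_zero_of_mulVec_eq_zero hHvdet hv
    exact vand_ker hqvuN xv hxv' h2
  -- Gram matrices and their inverses
  have hGApd : (Aᵀ * A).PosDef := posdef_transpose_mul_self A hAker
  have hGCpd : (Cᵀ * C).PosDef := posdef_transpose_mul_self C hCker
  set GA : Matrix (Fin quv) (Fin quv) ℝ := (Aᵀ * A)⁻¹ with hGAdef
  set GC : Matrix (Fin qvu) (Fin qvu) ℝ := (Cᵀ * C)⁻¹ with hGCdef
  have hGA1 : GA * (Aᵀ * A) = 1 := Matrix.nonsing_inv_mul _ (isUnit_iff_ne_zero.mpr (ne_of_gt hGApd.det_pos))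
  have hGC2 : (Cᵀ * C) * GC = 1 := Matrix.mul_nonsing_inv _ (isUnit_iff_ne_zero.mpr (ne_of_gt hGCpd.det_pos))
  -- symmetry
  have hHusym : ∀ i j, Hu i j = Hu j i := by
    intro i j
    have := congrFun (congrFun hHu.1 i) j
    simpa [Matrix.conjTranspose_apply] using this.symm
  have hHvsym : ∀ i j, Hv i j = Hv j i := by
    intro i j
    have := congrFun (congrFun hHv.1 i) j
    simpa [Matrix.conjTranspose_apply] using this.symm
  -- compatibility : Dᵀ * A = Cᵀ * B
  have hDA : ∀ (l : Fin qvu) (k : Fin quv),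
      (Dᵀ * A) l k = pvec xu (l : ℕ) ⬝ᵥ Hu *ᵥ pvec xu (k : ℕ) := by
    intro l k
    simp only [Matrix.mul_apply, Matrix.transpose_apply, hDdef, hAdef, hVudef,
      Matrix.of_apply, dotProduct, Matrix.mulVec, pvec]
    simp_rw [Finset.sum_mul]
    rw [Finset.sum_comm]
    simp_rw [Finset.mul_sum]
    refine Finset.sum_congr rfl fun j _ => Finset.sum_congr rfl fun i _ => ?_
    rw [hHusym i j]
    ring
  have hCB : ∀ (l : Fin qvu) (k : Fin quv),
      (Cᵀ * B) l k = pvec xv (l : ℕ) ⬝ᵥ Hv *ᵥ pvec xv (k : ℕ) := by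
    intro l k
    simp only [Matrix.mul_apply, Matrix.transpose_apply, hCdef, hBdef, hVvdef,
      Matrix.of_apply, dotProduct, Matrix.mulVec, pvec]
    simp_rw [Finset.sum_mul]
    rw [Finset.sum_comm]
    simp_rw [Finset.mul_sum]
    refine Finset.sum_congr rfl fun j _ => Finset.sum_congr rfl fun i _ => ?_
    rw [hHvsym i j]
    ring
  have hcompat : Dᵀ * A = Cᵀ * B := by
    ext l k
    have hlt : (l : ℕ) + (k : ℕ) < q := by
      have h1 := l.isLt
      have h2 := k.isLt
      omega
    rw [hDA l k, hCB l k, hQu _ _ hlt, hQv _ _ hlt]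
  -- the interpolation operator
  set Iuv : Matrix (Fin Nv) (Fin Nu) ℝ :=
    B * GA * Aᵀ + C * GC * Dᵀ - C * GC * (Cᵀ * B) * GA * Aᵀ with hIdef
  have hIA : Iuv * A = B := by
    rw [hIdef, Matrix.sub_mul, Matrix.add_mul]
    simp only [Matrix.mul_assoc]
    rw [hcompat, hGA1, Matrix.mul_one]
    simp only [← Matrix.mul_assoc]
    abel
  have hCI : Cᵀ * Iuv = Dᵀ := by
    rw [hIdef, Matrix.mul_sub, Matrix.mul_add]
    simp only [← Matrix.mul_assoc]
    rw [hGC2, Matrix.one_mul, Matrix.one_mul]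
    abel
  refine ⟨Iuv, ?_, ?_⟩
  · intro k hk
    set k' : Fin quv := ⟨k, hk⟩ with hk'
    have h1 : pvec xu k = A *ᵥ Pi.single k' 1 := by
      ext i
      simp [pvec, hAdef, hk']
    rw [h1, Matrix.mulVec_mulVec, hIA]
    ext i
    simp [pvec, hBdef, hk']
  · intro k hk
    set k' : Fin qvu := ⟨k, hk⟩ with hk'
    have h1 : pvec xv k = Vv *ᵥ Pi.single k' 1 := by
      ext i
      simp [pvec, hVvdef, hk']
    have h2 : (Hu⁻¹ * Iuvᵀ * Hv) *ᵥ pvec xv k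
        = (Hu⁻¹ * Iuvᵀ * Hv * Vv) *ᵥ Pi.single k' 1 := by
      rw [h1, Matrix.mulVec_mulVec]
    rw [h2]
    have h3 : Hu⁻¹ * Iuvᵀ * Hv * Vv = Hu⁻¹ * D := by
      have h4 : Iuvᵀ * C = D := by
        have := congrArg Matrix.transpose hCI
        simpa [Matrix.transpose_mul] using this
      calc Hu⁻¹ * Iuvᵀ * Hv * Vv = Hu⁻¹ * (Iuvᵀ * (Hv * Vv)) := by
            simp [Matrix.mul_assoc]
        _ = Hu⁻¹ * D := by rw [← hCdef, h4]
    rw [h3, hDdef, ← Matrix.mul_assoc, Matrix.nonsing_inv_mul _ (isUnit_iff_ne_zero.mpr hHudet), Matrix.one_mul]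
    ext i
    simp [pvec, hVudef, hk']
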